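/- arXiv:2408.08259 — 2 statements merged into one kernel-verified Lean document; each statement's English description precedes it below -/
import Mathlib

section
/- Let (θ,ρ) ∈ ℝ^{2d}, h > 0, R ≥ 1, M ∈ ℕ, B ∈ {0,1}^M. Write ℓ_min = ℓ_min(θ,ρ,B,h,R), a_T = a_{ℓ_min}(B), b_T = b_{ℓ_min}(B), let L ∈ [a_T : b_T], and set B* = B*(L, a_T, b_T, B). Then ℓ_min(θ,ρ,B,h,R) = ℓ_min(Φ_{h/R}^{RL}(θ,ρ), B*, h, R); that is, the number of orbit doublings selected by the no-U-turn procedure is the same from the initial point (θ,ρ) with sequence B as from the shifted point Φ_{h/R}^{RL}(θ,ρ) with the transformed sequence B*. -/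
open MeasureTheory

noncomputable section

/-! ### Combinatorial definitions for NUTS orbit selection -/

/-- Floor midpoint `⌊(a+b)/2⌋`. -/
def mid (a b : ℤ) : ℤ := (a + b) / 2

/-- `(−1)^x` for a bit `x`. -/
def signBit (x : Bool) : ℤ := if x then -1 else 1

/-- Left endpoint `a_ℓ(B)` of the orbit built from the Bernoulli directions `B` (1-indexed). -/
def aEnd (B : ℕ → Bool) : ℕ → ℤ
  | 0 => 0
  | ℓ + 1 => min (aEnd B ℓ) (aEnd B ℓ + signBit (B (ℓ + 1)) * 2 ^ ℓ)

/-- Right endpoint `b_ℓ(B)`. -/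
def bEnd (B : ℕ → Bool) : ℕ → ℤ
  | 0 => 0
  | ℓ + 1 => max (bEnd B ℓ) (bEnd B ℓ + signBit (B (ℓ + 1)) * 2 ^ ℓ)

/-- Proposed extension endpoint `ã_ℓ(B) = a_{ℓ−1}(B) + (−1)^{B_ℓ} 2^{ℓ−1}` (for `ℓ ≥ 1`). -/
def aT (B : ℕ → Bool) (ℓ : ℕ) : ℤ := aEnd B (ℓ - 1) + signBit (B ℓ) * 2 ^ (ℓ - 1)

/-- Proposed extension endpoint `b̃_ℓ(B) = b_{ℓ−1}(B) + (−1)^{B_ℓ} 2^{ℓ−1}` (for `ℓ ≥ 1`). -/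
def bT (B : ℕ → Bool) (ℓ : ℕ) : ℤ := bEnd B (ℓ - 1) + signBit (B ℓ) * 2 ^ (ℓ - 1)

/-- The binary string `β(L,a,b)`: `beta ℓ L a b i` is the `i`-th bit (1-indexed) of
`(β_i(L,a,b))_{i ∈ [1:ℓ]}`, where `[a:b]` is an interval with `b − a + 1 = 2^ℓ`. -/
def beta : ℕ → ℤ → ℤ → ℤ → ℕ → Bool
  | 0, _, _, _, _ => false
  | ℓ + 1, L, a, b, i =>
      if i = ℓ + 1 then decide (mid a b + 1 ≤ L)
      else if mid a b + 1 ≤ L then beta ℓ L (mid a b + 1) b i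
      else beta ℓ L a (mid a b) i

/-- The transformed sequence `B*(L,a,b,B)`: bits `1..ℓ` come from `β(L,a,b)`, the rest from `B`. -/
def bstar (ℓ : ℕ) (L a b : ℤ) (B : ℕ → Bool) : ℕ → Bool :=
  fun i => if 1 ≤ i ∧ i ≤ ℓ then beta ℓ L a b i else B i

/-- The domain `D`: tuples `(B, ℓ, a, b, L)` with `ℓ ∈ [1:M]`, `a = a_ℓ(B)`, `b = b_ℓ(B)`,
`a ≤ L ≤ b`. -/
def memD (M : ℕ) (B : ℕ → Bool) (ℓ : ℕ) (a b L : ℤ) : Prop :=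
  1 ≤ ℓ ∧ ℓ ≤ M ∧ a = aEnd B ℓ ∧ b = bEnd B ℓ ∧ a ≤ L ∧ L ≤ b

/-- The levels of the binary tree of subintervals of `[a:b]`: `treeLevel a b k` is the family of
intervals (coded as pairs) obtained from `[a:b]` by `k` successive halvings; with
`b − a + 1 = 2^ℓ` this is `T_{ℓ−k}([a:b])` of the paper. -/
def treeLevel (a b : ℤ) : ℕ → Set (ℤ × ℤ)
  | 0 => {(a, b)}
  | k + 1 => {p | ∃ q ∈ treeLevel a b k,
      p = (q.1, mid q.1 q.2) ∨ p = (mid q.1 q.2 + 1, q.2)}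

/-- The binary tree `T([a:b]) = ∪_{j=0}^{ℓ} T_j([a:b])` of subintervals of an interval `[a:b]`
with `b − a + 1 = 2^ℓ`. -/
def tree (ℓ : ℕ) (a b : ℤ) : Set (ℤ × ℤ) := ⋃ k ≤ ℓ, treeLevel a b k

/-! ### Leapfrog dynamics -/

/-- The state space `ℝ^d`. -/
abbrev ES (d : ℕ) := EuclideanSpace ℝ (Fin d)

/-- The momentum flip `S(θ,ρ) = (θ,−ρ)`. -/
def flipMom {d : ℕ} (p : ES d × ES d) : ES d × ES d := (p.1, -p.2)

/-- One leapfrog step of size `h` for the potential `U`. -/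
def leapfrog {d : ℕ} (U : ES d → ℝ) (h : ℝ) (p : ES d × ES d) : ES d × ES d :=
  let ρh := p.2 - (h / 2) • gradient U p.1
  let θ' := p.1 + h • ρh
  (θ', ρh - (h / 2) • gradient U θ')

/-- Integer iterates `Φ_h^i`, `i ∈ ℤ`, of the leapfrog integrator (negative iterates use the
inverse `S ∘ Φ_h ∘ S`). -/
def leapfrogIter {d : ℕ} (U : ES d → ℝ) (h : ℝ) : ℤ → ES d × ES d → ES d × ES d
  | Int.ofNat n => (leapfrog U h)^[n]
  | Int.negSucc n => (flipMom ∘ leapfrog U h ∘ flipMom)^[n + 1]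

/-- The Hamiltonian `H(θ,ρ) = U(θ) + |ρ|²/2`. -/
def Ham {d : ℕ} (U : ES d → ℝ) (p : ES d × ES d) : ℝ := U p.1 + (1 / 2) * ‖p.2‖ ^ 2

open Classical in
/-- The U-turn indicator `𝟙_Uturn(a,b,θ,ρ,h,R)` (coarse step size `hs`, fine step `hs/R`). -/
def uturnInd {d : ℕ} (U : ES d → ℝ) (hs : ℝ) (R : ℕ) (a b : ℤ) (p : ES d × ES d) : ℕ :=
  let qm := leapfrogIter U (hs / R) (R * a) p
  let qp := leapfrogIter U (hs / R) (R * b) p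
  if (inner ℝ qp.2 (qp.1 - qm.1) : ℝ) < 0 ∨ (inner ℝ qm.2 (qp.1 - qm.1) : ℝ) < 0 then 1 else 0

/-- The sub-U-turn indicator `𝟙_subUturn(a,b,θ,ρ,h,R)`, defined recursively by halving. -/
def subUturnInd {d : ℕ} (U : ES d → ℝ) (hs : ℝ) (R : ℕ) (p : ES d × ES d) (a b : ℤ) : ℕ :=
  if h : a < b then
    max (max (subUturnInd U hs R p a (mid a b)) (subUturnInd U hs R p (mid a b + 1) b))
      (uturnInd U hs R a b p)
  else 0
termination_by (b - a).toNat
decreasing_by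
  · have h1 : a ≤ mid a b := by unfold mid; omega
    have h2 : mid a b < b := by unfold mid; omega
    omega
  · have h1 : a ≤ mid a b := by unfold mid; omega
    have h2 : mid a b < b := by unfold mid; omega
    omega

/-- The number of doublings `ℓ_min(θ,ρ,B,h,R)` selected by the no-U-turn procedure with at most
`2^M` leapfrog iterates. -/
def ellMin {d : ℕ} (U : ES d → ℝ) (hs : ℝ) (R : ℕ) (M : ℕ) (B : ℕ → Bool)
    (p : ES d × ES d) : ℕ :=
  sInf ({ℓ | 1 ≤ ℓ ∧ ℓ ≤ M - 1 ∧
      (uturnInd U hs R (aEnd B ℓ) (bEnd B ℓ) p = 1 ∨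
        subUturnInd U hs R p (aT B (ℓ + 1)) (bT B (ℓ + 1)) = 1)} ∪ {M})

/-- The categorical (Boltzmann) index-selection kernel `Q(L | θ, ρ, a, b, h, R)`. -/
def Qkernel {d : ℕ} (U : ES d → ℝ) (hs : ℝ) (R : ℕ) (p : ES d × ES d)
    (a b L : ℤ) : ℝ :=
  if a ≤ L ∧ L ≤ b then
    Real.exp (-Ham U (leapfrogIter U (hs / R) (R * L) p)) /
      ∑ k ∈ Finset.Icc a b, Real.exp (-Ham U (leapfrogIter U (hs / R) (R * k) p))
  else 0

/-! ### The standard normal target -/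

/-- One leapfrog step of size `h` for the standard normal potential `U(θ) = |θ|²/2`
(for which `∇U(θ) = θ`). -/
def gaussLeapfrog {d : ℕ} (h : ℝ) (p : ES d × ES d) : ES d × ES d :=
  let ρh := p.2 - (h / 2) • p.1
  let θ' := p.1 + h • ρh
  (θ', ρh - (h / 2) • θ')

/-- Integer iterates of the standard normal leapfrog integrator. -/
def gaussLeapfrogIter {d : ℕ} (h : ℝ) : ℤ → ES d × ES d → ES d × ES d
  | Int.ofNat n => (gaussLeapfrog h)^[n]
  | Int.negSucc n => (flipMom ∘ gaussLeapfrog h ∘ flipMom)^[n + 1]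

/-- The standard normal Hamiltonian `H(θ,ρ) = (|θ|² + |ρ|²)/2`. -/
def gaussHam {d : ℕ} (p : ES d × ES d) : ℝ := (1 / 2) * (‖p.1‖ ^ 2 + ‖p.2‖ ^ 2)

/-- The modified Hamiltonian `H_h(θ,ρ) = (1 − h²/4)|θ|²/2 + |ρ|²/2` preserved by the standard
normal leapfrog integrator for `h ∈ (0,2)`. -/
def gaussHamMod {d : ℕ} (h : ℝ) (p : ES d × ES d) : ℝ :=
  (1 / 2) * (1 - h ^ 2 / 4) * ‖p.1‖ ^ 2 + (1 / 2) * ‖p.2‖ ^ 2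


section LeapfrogAux

noncomputable section

variable {d : ℕ} (U : ES d → ℝ) (h : ℝ)

lemma flipMom_flipMom (p : ES d × ES d) : flipMom (flipMom p) = p := by
  simp [flipMom]

/-- Inverse of the leapfrog step. -/
def leapfrogInv (p : ES d × ES d) : ES d × ES d := flipMom (leapfrog U h (flipMom p))

lemma leapfrog_pair (θ ρ : ES d) : leapfrog U h (θ, ρ) =
    (θ + h • (ρ - (h/2) • gradient U θ),
     (ρ - (h/2) • gradient U θ) - (h/2) • gradient U (θ + h • (ρ - (h/2) • gradient U θ))) := rfl

lemma leapfrogInv_leapfrog (p : ES d × ES d) : leapfrogInv U h (leapfrog U h p) = p := by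
  obtain ⟨θ, ρ⟩ := p
  rw [leapfrog_pair, leapfrogInv]
  rw [show flipMom ((θ + h • (ρ - (h/2) • gradient U θ),
      (ρ - (h/2) • gradient U θ) - (h/2) • gradient U (θ + h • (ρ - (h/2) • gradient U θ)))
        : ES d × ES d)
    = (θ + h • (ρ - (h/2) • gradient U θ),
      -((ρ - (h/2) • gradient U θ) - (h/2) • gradient U (θ + h • (ρ - (h/2) • gradient U θ))))
    from rfl]
  rw [leapfrog_pair]
  have hX : (θ + h • (ρ - (h/2) • gradient U θ)) + h •
      (-((ρ - (h/2) • gradient U θ) - (h/2) • gradient U (θ + h • (ρ - (h/2) • gradient U θ)))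
        - (h/2) • gradient U (θ + h • (ρ - (h/2) • gradient U θ))) = θ := by
    module
  rw [hX]
  simp only [flipMom, Prod.mk.injEq]
  refine ⟨trivial, ?_⟩
  module

lemma leapfrog_leapfrogInv (p : ES d × ES d) : leapfrog U h (leapfrogInv U h p) = p := by
  have := leapfrogInv_leapfrog U h (flipMom p)
  rw [leapfrogInv] at *
  have h2 := congrArg flipMom this
  simp only [flipMom_flipMom] at h2
  exact h2

/-- The leapfrog step as a permutation. -/
def lfEquiv : Equiv.Perm (ES d × ES d) :=
  ⟨leapfrog U h, leapfrogInv U h, leapfrogInv_leapfrog U h, leapfrog_leapfrogInv U h⟩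

lemma leapfrogIter_eq_zpow (i : ℤ) : leapfrogIter U h i = ⇑(lfEquiv U h ^ i) := by
  cases i with
  | ofNat n =>
      rw [leapfrogIter, show ((Int.ofNat n)) = (n : ℤ) from rfl, zpow_natCast]
      exact Equiv.Perm.iterate_eq_pow (lfEquiv U h) n
  | negSucc n =>
      rw [leapfrogIter, zpow_negSucc, ← inv_pow]
      have hc : ⇑(lfEquiv U h)⁻¹ = flipMom ∘ leapfrog U h ∘ flipMom := rfl
      rw [← Equiv.Perm.iterate_eq_pow, hc]

lemma leapfrogIter_add (i j : ℤ) (p : ES d × ES d) :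
    leapfrogIter U h (i + j) p = leapfrogIter U h i (leapfrogIter U h j p) := by
  simp only [leapfrogIter_eq_zpow, zpow_add, Equiv.Perm.mul_apply]

lemma leapfrogIter_zero (p : ES d × ES d) : leapfrogIter U h 0 p = p := rfl

end

end LeapfrogAux


section IndicatorAux

variable {d : ℕ} (U : ES d → ℝ) (hs : ℝ) (R : ℕ)

lemma mid_shift (a b L : ℤ) : mid (a + L) (b + L) = mid a b + L := by
  unfold mid; omega

lemma uturnInd_shift (L a b : ℤ) (p : ES d × ES d) :
    uturnInd U hs R a b (leapfrogIter U (hs / R) (R * L) p)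
      = uturnInd U hs R (a + L) (b + L) p := by
  simp only [uturnInd, ← leapfrogIter_add, ← mul_add]

lemma uturnInd_le_one (a b : ℤ) (p : ES d × ES d) : uturnInd U hs R a b p ≤ 1 := by
  simp only [uturnInd]
  split <;> simp

lemma subUturnInd_of_lt (p : ES d × ES d) {a b : ℤ} (hab : a < b) :
    subUturnInd U hs R p a b =
      max (max (subUturnInd U hs R p a (mid a b)) (subUturnInd U hs R p (mid a b + 1) b))
        (uturnInd U hs R a b p) := by
  rw [subUturnInd, dif_pos hab]

lemma subUturnInd_of_ge (p : ES d × ES d) {a b : ℤ} (hab : ¬ a < b) :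
    subUturnInd U hs R p a b = 0 := by
  rw [subUturnInd, dif_neg hab]

lemma subUturnInd_le_one (p : ES d × ES d) (a b : ℤ) : subUturnInd U hs R p a b ≤ 1 := by
  by_cases hab : a < b
  · rw [subUturnInd_of_lt U hs R p hab]
    have h1 := subUturnInd_le_one p a (mid a b)
    have h2 := subUturnInd_le_one p (mid a b + 1) b
    have h3 := uturnInd_le_one U hs R a b p
    omega
  · rw [subUturnInd_of_ge U hs R p hab]; omega
termination_by (b - a).toNat
decreasing_by
  · have h1 : a ≤ mid a b := by unfold mid; omega
    have h2 : mid a b < b := by unfold mid; omega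
    omega
  · have h1 : a ≤ mid a b := by unfold mid; omega
    have h2 : mid a b < b := by unfold mid; omega
    omega

lemma subUturnInd_shift (L : ℤ) (p : ES d × ES d) (a b : ℤ) :
    subUturnInd U hs R (leapfrogIter U (hs / R) (R * L) p) a b
      = subUturnInd U hs R p (a + L) (b + L) := by
  by_cases hab : a < b
  · rw [subUturnInd_of_lt U hs R _ hab, subUturnInd_of_lt U hs R p (by omega : a + L < b + L)]
    rw [mid_shift, subUturnInd_shift L p a (mid a b),
      show mid a b + L + 1 = (mid a b + 1) + L by ring,
      subUturnInd_shift L p (mid a b + 1) b, uturnInd_shift]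
  · rw [subUturnInd_of_ge U hs R _ hab, subUturnInd_of_ge U hs R p (by omega : ¬ a + L < b + L)]
termination_by (b - a).toNat
decreasing_by
  · have h1 : a ≤ mid a b := by unfold mid; omega
    have h2 : mid a b < b := by unfold mid; omega
    omega
  · have h1 : a ≤ mid a b := by unfold mid; omega
    have h2 : mid a b < b := by unfold mid; omega
    omega

lemma uturnInd_le_subUturnInd (p : ES d × ES d) {a b : ℤ} (hab : a < b) :
    uturnInd U hs R a b p ≤ subUturnInd U hs R p a b := by
  rw [subUturnInd_of_lt U hs R p hab]
  omega

end IndicatorAux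


section CombAux

lemma bEnd_eq_aEnd (B : ℕ → Bool) (ℓ : ℕ) : bEnd B ℓ = aEnd B ℓ + 2 ^ ℓ - 1 := by
  induction ℓ with
  | zero => simp [aEnd, bEnd]
  | succ n ih =>
      obtain ⟨t, ht, h2⟩ : ∃ t : ℤ, (2:ℤ)^n = t ∧ 0 < t := ⟨2^n, rfl, by positivity⟩
      rw [aEnd, bEnd, ih, pow_succ, ht]
      cases hb : B (n+1) <;> simp only [signBit, if_true, if_false, Bool.false_eq_true] <;> omega

lemma orbit_halves (B : ℕ → Bool) (j : ℕ) :
    ((aEnd B j, bEnd B j) = (aEnd B (j+1), mid (aEnd B (j+1)) (bEnd B (j+1))) ∧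
     (aT B (j+1), bT B (j+1)) = (mid (aEnd B (j+1)) (bEnd B (j+1)) + 1, bEnd B (j+1))) ∨
    ((aT B (j+1), bT B (j+1)) = (aEnd B (j+1), mid (aEnd B (j+1)) (bEnd B (j+1))) ∧
     (aEnd B j, bEnd B j) = (mid (aEnd B (j+1)) (bEnd B (j+1)) + 1, bEnd B (j+1))) := by
  have hb := bEnd_eq_aEnd B j
  obtain ⟨t, ht, h2⟩ : ∃ t : ℤ, (2:ℤ)^j = t ∧ 0 < t := ⟨2^j, rfl, by positivity⟩
  rw [ht] at hb
  cases hB : B (j+1)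
  · left
    simp only [aEnd, bEnd, aT, bT, Nat.add_sub_cancel, hB, signBit, Bool.false_eq_true,
      if_false, mid, Prod.mk.injEq, ht]
    omega
  · right
    simp only [aEnd, bEnd, aT, bT, Nat.add_sub_cancel, hB, signBit, if_true,
      mid, Prod.mk.injEq, ht]
    omega

lemma beta_endpoints : ∀ (ℓ : ℕ) (L a b : ℤ) (Bx : ℕ → Bool),
    b = a + 2 ^ ℓ - 1 → a ≤ L → L ≤ b →
    (∀ i, 1 ≤ i → i ≤ ℓ → Bx i = beta ℓ L a b i) →
    aEnd Bx ℓ = a - L ∧ bEnd Bx ℓ = b - L := by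
  intro ℓ
  induction ℓ with
  | zero =>
      intro L a b Bx hb ha hL _
      simp only [aEnd, bEnd, pow_zero] at *
      omega
  | succ n ih =>
      intro L a b Bx hb haL hLb hbits
      obtain ⟨t, ht, h2⟩ : ∃ t : ℤ, (2:ℤ)^n = t ∧ 0 < t := ⟨2^n, rfl, by positivity⟩
      have hb' : b = a + 2 * t - 1 := by rw [hb, pow_succ]; omega
      have hm : mid a b = a + t - 1 := by unfold mid; omega
      have htop : Bx (n+1) = decide (mid a b + 1 ≤ L) := by
        rw [hbits (n+1) (by omega) le_rfl]
        simp [beta]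
      by_cases hSide : mid a b + 1 ≤ L
      · have hlow : ∀ i, 1 ≤ i → i ≤ n → Bx i = beta n L (mid a b + 1) b i := by
          intro i h1 h2
          rw [hbits i h1 (by omega), show beta (n+1) L a b i = if i = n + 1 then decide (mid a b + 1 ≤ L) else if mid a b + 1 ≤ L then beta n L (mid a b + 1) b i else beta n L a (mid a b) i from rfl,
            if_neg (by omega : ¬ i = n + 1), if_pos hSide]
        have hihc := ih L (mid a b + 1) b Bx (by rw [ht]; omega) hSide hLb hlow
        have hBtrue : Bx (n+1) = true := by rw [htop]; simp [hSide]
        rw [aEnd, bEnd, hihc.1, hihc.2, hBtrue]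
        simp only [signBit, if_true, ht]
        omega
      · have hlow : ∀ i, 1 ≤ i → i ≤ n → Bx i = beta n L a (mid a b) i := by
          intro i h1 h2
          rw [hbits i h1 (by omega), show beta (n+1) L a b i = if i = n + 1 then decide (mid a b + 1 ≤ L) else if mid a b + 1 ≤ L then beta n L (mid a b + 1) b i else beta n L a (mid a b) i from rfl,
            if_neg (by omega : ¬ i = n + 1), if_neg hSide]
        have hihc := ih L a (mid a b) Bx (by rw [ht]; omega) haL (by omega) hlow
        have hBfalse : Bx (n+1) = false := by rw [htop]; simp [hSide]
        rw [aEnd, bEnd, hihc.1, hihc.2, hBfalse]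
        simp only [signBit, Bool.false_eq_true, if_false, ht]
        omega

end CombAux


section SubAux

variable {d : ℕ} (U : ES d → ℝ) (hs : ℝ) (R : ℕ) (p : ES d × ES d)

lemma signBit_true : signBit true = -1 := rfl
lemma signBit_false : signBit false = 1 := rfl

lemma sub_no_uturn : ∀ (ℓ : ℕ) (L a b : ℤ) (Bx : ℕ → Bool),
    b = a + 2 ^ ℓ - 1 → a ≤ L → L ≤ b →
    (∀ i, 1 ≤ i → i ≤ ℓ → Bx i = beta ℓ L a b i) →
    subUturnInd U hs R p a b = 0 →
    ∀ ℓ', 1 ≤ ℓ' → ℓ' ≤ ℓ →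
      uturnInd U hs R (aEnd Bx ℓ' + L) (bEnd Bx ℓ' + L) p = 0 ∧
      subUturnInd U hs R p (aT Bx ℓ' + L) (bT Bx ℓ' + L) = 0 := by
  intro ℓ
  induction ℓ with
  | zero => intro L a b Bx _ _ _ _ _ ℓ' h1 h2; omega
  | succ n ih =>
      intro L a b Bx hb haL hLb hbits hsub ℓ' h1 h2
      obtain ⟨t, ht, hts⟩ : ∃ t : ℤ, (2:ℤ)^n = t ∧ 0 < t := ⟨2^n, rfl, by positivity⟩
      have hb' : b = a + 2 * t - 1 := by rw [hb, pow_succ]; omega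
      have hm : mid a b = a + t - 1 := by unfold mid; omega
      have hab : a < b := by omega
      rw [subUturnInd_of_lt U hs R p hab] at hsub
      have hle1 := subUturnInd_le_one U hs R p a (mid a b)
      have hle2 := subUturnInd_le_one U hs R p (mid a b + 1) b
      have hle3 := uturnInd_le_one U hs R a b p
      have hsub1 : subUturnInd U hs R p a (mid a b) = 0 := by omega
      have hsub2 : subUturnInd U hs R p (mid a b + 1) b = 0 := by omega
      have huturn : uturnInd U hs R a b p = 0 := by omega
      have htop : Bx (n+1) = decide (mid a b + 1 ≤ L) := by
        rw [hbits (n+1) (by omega) le_rfl]; simp [beta]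
      have hepf := beta_endpoints (n+1) L a b Bx hb haL hLb hbits
      by_cases hSide : mid a b + 1 ≤ L
      · have hlow : ∀ i, 1 ≤ i → i ≤ n → Bx i = beta n L (mid a b + 1) b i := by
          intro i hi1 hi2
          rw [hbits i hi1 (by omega), show beta (n+1) L a b i = if i = n + 1
              then decide (mid a b + 1 ≤ L) else if mid a b + 1 ≤ L
              then beta n L (mid a b + 1) b i else beta n L a (mid a b) i from rfl,
            if_neg (by omega : ¬ i = n + 1), if_pos hSide]
        have hep := beta_endpoints n L (mid a b + 1) b Bx (by omega) hSide hLb hlow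
        rcases Nat.lt_or_ge ℓ' (n+1) with hc | hc
        · exact ih L (mid a b + 1) b Bx (by omega) hSide hLb hlow hsub2 ℓ' h1 (by omega)
        · have hℓ' : ℓ' = n + 1 := by omega
          subst hℓ'
          have hBtrue : Bx (n+1) = true := by rw [htop]; simp [hSide]
          constructor
          · rw [hepf.1, hepf.2, show a - L + L = a by ring, show b - L + L = b by ring]
            exact huturn
          · have haTv : aT Bx (n+1) + L = a := by
              simp only [aT, Nat.add_sub_cancel, hep.1, hBtrue, signBit_true, ht]; omega
            have hbTv : bT Bx (n+1) + L = mid a b := by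
              simp only [bT, Nat.add_sub_cancel, hep.2, hBtrue, signBit_true, ht]; omega
            rw [haTv, hbTv]; exact hsub1
      · have hlow : ∀ i, 1 ≤ i → i ≤ n → Bx i = beta n L a (mid a b) i := by
          intro i hi1 hi2
          rw [hbits i hi1 (by omega), show beta (n+1) L a b i = if i = n + 1
              then decide (mid a b + 1 ≤ L) else if mid a b + 1 ≤ L
              then beta n L (mid a b + 1) b i else beta n L a (mid a b) i from rfl,
            if_neg (by omega : ¬ i = n + 1), if_neg hSide]
        have hep := beta_endpoints n L a (mid a b) Bx (by omega) haL (by omega) hlow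
        rcases Nat.lt_or_ge ℓ' (n+1) with hc | hc
        · exact ih L a (mid a b) Bx (by omega) haL (by omega) hlow hsub1 ℓ' h1 (by omega)
        · have hℓ' : ℓ' = n + 1 := by omega
          subst hℓ'
          have hBfalse : Bx (n+1) = false := by rw [htop]; simp [hSide]
          constructor
          · rw [hepf.1, hepf.2, show a - L + L = a by ring, show b - L + L = b by ring]
            exact huturn
          · have haTv : aT Bx (n+1) + L = mid a b + 1 := by
              simp only [aT, Nat.add_sub_cancel, hep.1, hBfalse, signBit_false, ht]; omega
            have hbTv : bT Bx (n+1) + L = b := by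
              simp only [bT, Nat.add_sub_cancel, hep.2, hBfalse, signBit_false, ht]; omega
            rw [haTv, hbTv]; exact hsub2

lemma subtop (n : ℕ) (L a b : ℤ) (Bx : ℕ → Bool)
    (hb : b = a + 2 ^ (n+1) - 1) (haL : a ≤ L) (hLb : L ≤ b)
    (hbits : ∀ i, 1 ≤ i → i ≤ n + 1 → Bx i = beta (n+1) L a b i)
    (hsub1 : subUturnInd U hs R p a (mid a b) = 0)
    (hsub2 : subUturnInd U hs R p (mid a b + 1) b = 0) :
    ∀ ℓ', 1 ≤ ℓ' → ℓ' ≤ n + 1 →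
      (ℓ' ≤ n → uturnInd U hs R (aEnd Bx ℓ' + L) (bEnd Bx ℓ' + L) p = 0) ∧
      subUturnInd U hs R p (aT Bx ℓ' + L) (bT Bx ℓ' + L) = 0 := by
  intro ℓ' h1 h2
  obtain ⟨t, ht, hts⟩ : ∃ t : ℤ, (2:ℤ)^n = t ∧ 0 < t := ⟨2^n, rfl, by positivity⟩
  have hb' : b = a + 2 * t - 1 := by rw [hb, pow_succ]; omega
  have hm : mid a b = a + t - 1 := by unfold mid; omega
  have htop : Bx (n+1) = decide (mid a b + 1 ≤ L) := by
    rw [hbits (n+1) (by omega) le_rfl]; simp [beta]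
  by_cases hSide : mid a b + 1 ≤ L
  · have hlow : ∀ i, 1 ≤ i → i ≤ n → Bx i = beta n L (mid a b + 1) b i := by
      intro i hi1 hi2
      rw [hbits i hi1 (by omega), show beta (n+1) L a b i = if i = n + 1
          then decide (mid a b + 1 ≤ L) else if mid a b + 1 ≤ L
          then beta n L (mid a b + 1) b i else beta n L a (mid a b) i from rfl,
        if_neg (by omega : ¬ i = n + 1), if_pos hSide]
    have hep := beta_endpoints n L (mid a b + 1) b Bx (by omega) hSide hLb hlow
    rcases Nat.lt_or_ge ℓ' (n+1) with hc | hc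
    · have hres := sub_no_uturn U hs R p n L (mid a b + 1) b Bx (by omega) hSide hLb hlow
        hsub2 ℓ' h1 (by omega)
      exact ⟨fun _ => hres.1, hres.2⟩
    · have hℓ' : ℓ' = n + 1 := by omega
      subst hℓ'
      have hBtrue : Bx (n+1) = true := by rw [htop]; simp [hSide]
      refine ⟨fun hcon => by omega, ?_⟩
      have haTv : aT Bx (n+1) + L = a := by
        simp only [aT, Nat.add_sub_cancel, hep.1, hBtrue, signBit_true, ht]; omega
      have hbTv : bT Bx (n+1) + L = mid a b := by
        simp only [bT, Nat.add_sub_cancel, hep.2, hBtrue, signBit_true, ht]; omega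
      rw [haTv, hbTv]; exact hsub1
  · have hlow : ∀ i, 1 ≤ i → i ≤ n → Bx i = beta n L a (mid a b) i := by
      intro i hi1 hi2
      rw [hbits i hi1 (by omega), show beta (n+1) L a b i = if i = n + 1
          then decide (mid a b + 1 ≤ L) else if mid a b + 1 ≤ L
          then beta n L (mid a b + 1) b i else beta n L a (mid a b) i from rfl,
        if_neg (by omega : ¬ i = n + 1), if_neg hSide]
    have hep := beta_endpoints n L a (mid a b) Bx (by omega) haL (by omega) hlow
    rcases Nat.lt_or_ge ℓ' (n+1) with hc | hc
    · have hres := sub_no_uturn U hs R p n L a (mid a b) Bx (by omega) haL (by omega) hlow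
        hsub1 ℓ' h1 (by omega)
      exact ⟨fun _ => hres.1, hres.2⟩
    · have hℓ' : ℓ' = n + 1 := by omega
      subst hℓ'
      have hBfalse : Bx (n+1) = false := by rw [htop]; simp [hSide]
      refine ⟨fun hcon => by omega, ?_⟩
      have haTv : aT Bx (n+1) + L = mid a b + 1 := by
        simp only [aT, Nat.add_sub_cancel, hep.1, hBfalse, signBit_false, ht]; omega
      have hbTv : bT Bx (n+1) + L = b := by
        simp only [bT, Nat.add_sub_cancel, hep.2, hBfalse, signBit_false, ht]; omega
      rw [haTv, hbTv]; exact hsub2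

end SubAux


section OrbitAux

variable {d : ℕ} (U : ES d → ℝ) (hs : ℝ) (R : ℕ) (p : ES d × ES d)

lemma orbit_sub_zero (B : ℕ → Bool) (lm : ℕ)
    (hnot : ∀ k, 1 ≤ k → k < lm →
      uturnInd U hs R (aEnd B k) (bEnd B k) p = 0 ∧
      subUturnInd U hs R p (aT B (k+1)) (bT B (k+1)) = 0) :
    ∀ j, j < lm → subUturnInd U hs R p (aEnd B j) (bEnd B j) = 0 := by
  intro j
  induction j with
  | zero => intro _; exact subUturnInd_of_ge U hs R p (by simp [aEnd, bEnd])
  | succ n ihn =>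
      intro hlt
      have hsubn := ihn (by omega)
      have hExt : subUturnInd U hs R p (aT B (n+1)) (bT B (n+1)) = 0 := by
        rcases Nat.eq_zero_or_pos n with rfl | hn0
        · exact subUturnInd_of_ge U hs R p (by simp [aT, bT, aEnd, bEnd])
        · exact (hnot n hn0 (by omega)).2
      have hU : uturnInd U hs R (aEnd B (n+1)) (bEnd B (n+1)) p = 0 :=
        (hnot (n+1) (by omega) hlt).1
      have hblen := bEnd_eq_aEnd B (n+1)
      obtain ⟨t, ht, hts⟩ : ∃ t : ℤ, (2:ℤ)^(n+1) = t ∧ 2 ≤ t :=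
        ⟨2^(n+1), rfl, by
          rw [pow_succ]
          obtain ⟨s, hs1, hs2⟩ : ∃ s:ℤ, (2:ℤ)^n = s ∧ 0 < s := ⟨_, rfl, by positivity⟩
          rw [hs1]; omega⟩
      have hab : aEnd B (n+1) < bEnd B (n+1) := by rw [hblen, ht]; omega
      rw [subUturnInd_of_lt U hs R p hab]
      rcases orbit_halves B n with ⟨h1, h2⟩ | ⟨h1, h2⟩
      · simp only [Prod.mk.injEq] at h1 h2
        rw [h1.1, h1.2] at hsubn
        rw [h2.1, h2.2] at hExt
        omega
      · simp only [Prod.mk.injEq] at h1 h2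
        rw [h1.1, h1.2] at hExt
        rw [h2.1, h2.2] at hsubn
        omega

lemma high_endpoints (B Bs : ℕ → Bool) (lm : ℕ) (L : ℤ)
    (hbase_a : aEnd Bs lm = aEnd B lm - L) (hbase_b : bEnd Bs lm = bEnd B lm - L)
    (hbits : ∀ i, lm < i → Bs i = B i) :
    ∀ ℓ, lm ≤ ℓ → aEnd Bs ℓ = aEnd B ℓ - L ∧ bEnd Bs ℓ = bEnd B ℓ - L := by
  intro ℓ hℓ
  induction ℓ, hℓ using Nat.le_induction with
  | base => exact ⟨hbase_a, hbase_b⟩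
  | succ n hn ih =>
      rw [aEnd, bEnd, aEnd, bEnd, ih.1, ih.2, hbits (n+1) (by omega)]
      obtain ⟨e, he⟩ : ∃ e, signBit (B (n+1)) * 2^n = e := ⟨_, rfl⟩
      rw [he]
      constructor <;> omega

end OrbitAux

end
/-- With `ℓ_min = ℓ_min(θ,ρ,B,h,R)`, `a_T = a_{ℓ_min}(B)`,
`b_T = b_{ℓ_min}(B)`, `L ∈ [a_T:b_T]` and `B* = B*(L,a_T,b_T,B)`, the number of orbit doublings
is the same from `(θ,ρ)` with `B` as from `Φ_{h/R}^{RL}(θ,ρ)` with `B*`. -/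
theorem ellMin_symmetry {d : ℕ} (U : ES d → ℝ) (hU : ContDiff ℝ 1 U)
    (hs : ℝ) (hhs : 0 < hs) (R : ℕ) (hR : 1 ≤ R) (M : ℕ) (B : ℕ → Bool) (p : ES d × ES d)
    (lm : ℕ) (hlm : lm = ellMin U hs R M B p) (L : ℤ)
    (hL1 : aEnd B lm ≤ L) (hL2 : L ≤ bEnd B lm)
    (Bs : ℕ → Bool) (hBs : Bs = bstar lm L (aEnd B lm) (bEnd B lm) B) :
    ellMin U hs R M B p = ellMin U hs R M Bs (leapfrogIter U (hs / R) (R * L) p) := by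
  rcases Nat.eq_zero_or_pos M with rfl | hM0
  · have h0 : ∀ (C : ℕ → Bool) (q : ES d × ES d), ellMin U hs R 0 C q = 0 := by
      intro C q
      unfold ellMin
      exact Nat.le_zero.mp (Nat.sInf_le (Set.mem_union_right _ rfl))
    rw [h0, h0]
  · unfold ellMin at hlm
    have hne1 : ({ℓ | 1 ≤ ℓ ∧ ℓ ≤ M - 1 ∧
        (uturnInd U hs R (aEnd B ℓ) (bEnd B ℓ) p = 1 ∨
          subUturnInd U hs R p (aT B (ℓ + 1)) (bT B (ℓ + 1)) = 1)} ∪ {M}).Nonempty :=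
      ⟨M, Set.mem_union_right _ rfl⟩
    have hmem := Nat.sInf_mem hne1
    rw [← hlm] at hmem
    have hlmM : lm ≤ M := by rw [hlm]; exact Nat.sInf_le (Set.mem_union_right _ rfl)
    have hlm1 : 1 ≤ lm := by
      rcases hmem with hc | hc
      · exact hc.1
      · simp only [Set.mem_singleton_iff] at hc; omega
    have hnot : ∀ k, 1 ≤ k → k < lm →
        uturnInd U hs R (aEnd B k) (bEnd B k) p = 0 ∧
        subUturnInd U hs R p (aT B (k+1)) (bT B (k+1)) = 0 := by
      intro k hk1 hk2
      have hk3 := Nat.notMem_of_lt_sInf (hlm ▸ hk2)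
      simp only [Set.mem_union, Set.mem_setOf_eq, Set.mem_singleton_iff, not_or] at hk3
      have hu := uturnInd_le_one U hs R (aEnd B k) (bEnd B k) p
      have hsb := subUturnInd_le_one U hs R p (aT B (k+1)) (bT B (k+1))
      have hno : ¬(uturnInd U hs R (aEnd B k) (bEnd B k) p = 1 ∨
          subUturnInd U hs R p (aT B (k+1)) (bT B (k+1)) = 1) :=
        fun hor => hk3.1 ⟨hk1, by omega, hor⟩
      push_neg at hno
      omega
    obtain ⟨n, rfl⟩ : ∃ n, lm = n + 1 := ⟨lm - 1, by omega⟩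
    have hsubL : subUturnInd U hs R p (aEnd B n) (bEnd B n) = 0 :=
      orbit_sub_zero U hs R p B (n+1) hnot n (by omega)
    have hExtTop : subUturnInd U hs R p (aT B (n+1)) (bT B (n+1)) = 0 := by
      rcases Nat.eq_zero_or_pos n with rfl | hn0
      · exact subUturnInd_of_ge U hs R p (by simp [aT, bT, aEnd, bEnd])
      · exact (hnot n hn0 (by omega)).2
    have hsub1 : subUturnInd U hs R p (aEnd B (n+1))
        (mid (aEnd B (n+1)) (bEnd B (n+1))) = 0 := by
      rcases orbit_halves B n with ⟨h1, h2⟩ | ⟨h1, h2⟩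
      · simp only [Prod.mk.injEq] at h1
        rw [h1.1, h1.2] at hsubL; exact hsubL
      · simp only [Prod.mk.injEq] at h1
        rw [h1.1, h1.2] at hExtTop; exact hExtTop
    have hsub2 : subUturnInd U hs R p (mid (aEnd B (n+1)) (bEnd B (n+1)) + 1)
        (bEnd B (n+1)) = 0 := by
      rcases orbit_halves B n with ⟨h1, h2⟩ | ⟨h1, h2⟩
      · simp only [Prod.mk.injEq] at h2
        rw [h2.1, h2.2] at hExtTop; exact hExtTop
      · simp only [Prod.mk.injEq] at h2
        rw [h2.1, h2.2] at hsubL; exact hsubL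
    have hbitsS : ∀ i, 1 ≤ i → i ≤ n + 1 →
        Bs i = beta (n+1) L (aEnd B (n+1)) (bEnd B (n+1)) i := by
      intro i h1 h2
      rw [hBs]
      simp only [bstar]
      rw [if_pos ⟨h1, h2⟩]
    have hbitsHigh : ∀ i, n + 1 < i → Bs i = B i := by
      intro i hi
      rw [hBs]; simp only [bstar]; rw [if_neg (by omega)]
    have hbase := beta_endpoints (n+1) L (aEnd B (n+1)) (bEnd B (n+1)) Bs
      (bEnd_eq_aEnd B (n+1)) hL1 hL2 hbitsS
    have hTop := subtop U hs R p n L (aEnd B (n+1)) (bEnd B (n+1)) Bs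
      (bEnd_eq_aEnd B (n+1)) hL1 hL2 hbitsS hsub1 hsub2
    unfold ellMin
    rw [← hlm]
    apply le_antisymm
    · refine le_csInf ⟨M, Set.mem_union_right _ rfl⟩ ?_
      intro k hk
      rcases hk with hc | hc
      · simp only [Set.mem_setOf_eq] at hc
        obtain ⟨hk1, hk2, hor⟩ := hc
        by_contra hcon
        push_neg at hcon
        have hres1 := (hTop k hk1 (by omega)).1 (by omega)
        have hres2 := (hTop (k+1) (by omega) (by omega)).2
        rcases hor with hu | hsb
        · rw [uturnInd_shift] at hu
          rw [hu] at hres1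
          exact one_ne_zero hres1
        · rw [subUturnInd_shift] at hsb
          rw [hsb] at hres2
          exact one_ne_zero hres2
      · simp only [Set.mem_singleton_iff] at hc
        omega
    · apply Nat.sInf_le
      rcases hmem with hc | hc
      · simp only [Set.mem_setOf_eq] at hc
        obtain ⟨hk1, hk2, hor⟩ := hc
        refine Set.mem_union_left _ ?_
        refine ⟨hk1, hk2, ?_⟩
        have eqa : aEnd Bs (n+1) + L = aEnd B (n+1) := by rw [hbase.1]; ring
        have eqb : bEnd Bs (n+1) + L = bEnd B (n+1) := by rw [hbase.2]; ring
        have eqaT : aT Bs (n+1+1) + L = aT B (n+1+1) := by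
          simp only [aT, Nat.add_sub_cancel]
          rw [hbase.1, hbitsHigh (n+1+1) (by omega)]
          ring
        have eqbT : bT Bs (n+1+1) + L = bT B (n+1+1) := by
          simp only [bT, Nat.add_sub_cancel]
          rw [hbase.2, hbitsHigh (n+1+1) (by omega)]
          ring
        rcases hor with hu | hsb
        · left
          rw [uturnInd_shift, eqa, eqb]
          exact hu
        · right
          rw [subUturnInd_shift, eqaT, eqbT]
          exact hsb
      · simp only [Set.mem_singleton_iff] at hc
        exact Set.mem_union_right _ hc
end

section
/- For the standard normal target in dimension d, h ∈ (0,2), any (θ,ρ) ∈ ℝ^{2d}, and any L ∈ ℤ, writing (θ*,ρ*) = Φ_h^L(θ,ρ), the leapfrog energy error satisfies the identity H(θ*,ρ*) − H(θ,ρ) = (h²/8)·(|θ*|² − |θ|²). -/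
open MeasureTheory

lemma gaussHamMod_step {d : ℕ} (h : ℝ) (p : ES d × ES d) :
    gaussHamMod h (gaussLeapfrog h p) = gaussHamMod h p := by
  obtain ⟨θ, ρ⟩ := p
  simp only [gaussHamMod, gaussLeapfrog]
  simp only [← real_inner_self_eq_norm_sq]
  simp only [inner_sub_left, inner_sub_right, inner_add_left, inner_add_right,
    inner_smul_left, inner_smul_right, real_inner_comm θ ρ, starRingEnd_apply, star_trivial]
  ring

lemma gaussHamMod_flip {d : ℕ} (h : ℝ) (p : ES d × ES d) :
    gaussHamMod h (flipMom p) = gaussHamMod h p := by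
  simp [gaussHamMod, flipMom]

lemma gaussHamMod_iter {d : ℕ} (h : ℝ) (L : ℤ) (p : ES d × ES d) :
    gaussHamMod h (gaussLeapfrogIter h L p) = gaussHamMod h p := by
  cases L with
  | ofNat n =>
      show gaussHamMod h ((gaussLeapfrog h)^[n] p) = _
      induction n with
      | zero => rfl
      | succ n ih =>
          rw [Function.iterate_succ_apply', gaussHamMod_step, ih]
  | negSucc n =>
      show gaussHamMod h ((flipMom ∘ gaussLeapfrog h ∘ flipMom)^[n + 1] p) = _
      induction n + 1 with
      | zero => rfl
      | succ n ih =>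
          rw [Function.iterate_succ_apply', Function.comp_apply, Function.comp_apply,
            gaussHamMod_flip, gaussHamMod_step, gaussHamMod_flip, ih]

lemma gaussHam_eq_mod {d : ℕ} (h : ℝ) (p : ES d × ES d) :
    gaussHam p = gaussHamMod h p + h ^ 2 / 8 * ‖p.1‖ ^ 2 := by
  simp [gaussHam, gaussHamMod]; ring

/-- For the standard normal target, `h ∈ (0,2)` and `(θ*,ρ*) = Φ_h^L(θ,ρ)`,
the leapfrog energy error satisfies `H(θ*,ρ*) − H(θ,ρ) = (h²/8)(|θ*|² − |θ|²)`. -/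
theorem gauss_energy_error_identity {d : ℕ} (h : ℝ) (h0 : 0 < h) (h2 : h < 2)
    (p : ES d × ES d) (L : ℤ) :
    gaussHam (gaussLeapfrogIter h L p) - gaussHam p =
      h ^ 2 / 8 * (‖(gaussLeapfrogIter h L p).1‖ ^ 2 - ‖p.1‖ ^ 2) := by
  rw [gaussHam_eq_mod h, gaussHam_eq_mod h p, gaussHamMod_iter]
  ring
end
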